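/- Let S and O be finite sets, (x₀, y₀) ∈ S × O, and let μ be a probability measure on pairs (P, B) where P is a row-stochastic S × S matrix and B is a row-stochastic S × O matrix. Suppose ((X_t, Y_t))_{t ≥ 1} is a process with values in S × O such that (X₁, Y₁) = (x₀, y₀) almost surely and, for every T ≥ 1 and every (x, y) ∈ S^T × O^T with (x₁, y₁) = (x₀, y₀), P((X_t, Y_t) = (x_t, y_t) for 1 ≤ t ≤ T) = ∫ ∏_{t=1}^{T-1} P_{x_t x_{t+1}} B_{x_{t+1} y_{t+1}} dμ(P, B). Then the augmented process ((X_t, Y_t))_{t ≥ 1} is a mixture of Markov chains on the finite set S × O, with the matrix Q^{(P,B)} given by Q^{(P,B)}_{(i,j),(k,l)} = P_{ik} B_{kl} being row-stochastic; consequently the augmented process is partially exchangeable as a process on S × O. -/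

import Mathlib

open MeasureTheory

/-- A row-stochastic matrix with real entries (rows indexed by `S`, columns by `T`). -/
def IsRowStochastic {S T : Type*} [Fintype T] (M : S → T → ℝ) : Prop :=
  (∀ i j, 0 ≤ M i j) ∧ ∀ i, ∑ j, M i j = 1

/-- The number of transitions from `u` to `v` among the first `T` entries of the
sequence `z`. -/
def transCount {A : Type*} [DecidableEq A] (T : ℕ) (z : ℕ → A) (u v : A) : ℕ :=
  ∑ t ∈ Finset.range (T - 1), if z t = u ∧ z (t + 1) = v then 1 else 0

/-- The process `Z` (under the probability measure `P`), started at `z₀`, is a mixture of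
Markov chains on the finite set `A`. -/
def IsMixtureOfMarkovChains {Ω : Type*} [MeasurableSpace Ω] (P : Measure Ω)
    {A : Type*} [Fintype A] (Z : ℕ → Ω → A) (z₀ : A) : Prop :=
  ∃ ν : Measure {Q : A → A → ℝ // IsRowStochastic Q},
    IsProbabilityMeasure ν ∧
      ∀ T : ℕ, 1 ≤ T → ∀ z : ℕ → A, z 0 = z₀ →
        (P {ω | ∀ t < T, Z t ω = z t}).toReal =
          ∫ Q', ∏ t ∈ Finset.range (T - 1), Q'.val (z t) (z (t + 1)) ∂ν

/-- The process `Z` (under the probability measure `P`) is partially exchangeable. -/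
def IsPartiallyExchangeable {Ω : Type*} [MeasurableSpace Ω] (P : Measure Ω)
    {A : Type*} [DecidableEq A] (Z : ℕ → Ω → A) : Prop :=
  ∀ T : ℕ, 1 ≤ T → ∀ z z' : ℕ → A, z 0 = z' 0 →
    (∀ u v : A, transCount T z u v = transCount T z' u v) →
    P {ω | ∀ t < T, Z t ω = z t} = P {ω | ∀ t < T, Z t ω = z' t}

lemma prod_trans_eq {A : Type*} [DecidableEq A] [Fintype A] (T : ℕ) (z : ℕ → A)
    (Q : A → A → ℝ) :
    ∏ t ∈ Finset.range (T - 1), Q (z t) (z (t + 1)) =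
      ∏ p : A × A, Q p.1 p.2 ^ transCount T z p.1 p.2 := by
  have h1 : ∀ t, Q (z t) (z (t + 1)) =
      ∏ p : A × A, if z t = p.1 ∧ z (t + 1) = p.2 then Q p.1 p.2 else 1 := by
    intro t
    have : ∀ p : A × A, (z t = p.1 ∧ z (t + 1) = p.2) ↔ ((z t, z (t+1)) = p) := by
      intro p; rw [Prod.ext_iff]
    simp only [this]
    rw [Finset.prod_ite_eq]
    simp
  simp only [h1]
  rw [Finset.prod_comm]
  refine Finset.prod_congr rfl fun p _ => ?_
  have : ∀ t, (if z t = p.1 ∧ z (t + 1) = p.2 then Q p.1 p.2 else 1) =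
      Q p.1 p.2 ^ (if z t = p.1 ∧ z (t + 1) = p.2 then 1 else 0) := by
    intro t; split <;> simp
  simp only [this]
  rw [Finset.prod_pow_eq_pow_sum]
  rfl

lemma mixture_implies_pe {Ω : Type*} [MeasurableSpace Ω] (P : Measure Ω)
    [IsProbabilityMeasure P] {A : Type*} [Fintype A] [DecidableEq A]
    (Z : ℕ → Ω → A) (z₀ : A)
    (hstart : ∀ z : ℕ → A, z 0 ≠ z₀ → P {ω | ∀ t < 1, Z t ω = z t} = 0)
    (h : IsMixtureOfMarkovChains P Z z₀) : IsPartiallyExchangeable P Z := by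
  obtain ⟨ν, hν, hint⟩ := h
  intro T hT z z' h0 hcnt
  by_cases hz : z 0 = z₀
  · have hz' : z' 0 = z₀ := h0 ▸ hz
    have h1 := hint T hT z hz
    have h2 := hint T hT z' hz'
    have : ∫ Q', ∏ t ∈ Finset.range (T - 1), Q'.val (z t) (z (t + 1)) ∂ν =
        ∫ Q', ∏ t ∈ Finset.range (T - 1), Q'.val (z' t) (z' (t + 1)) ∂ν := by
      refine integral_congr_ae (Filter.Eventually.of_forall fun Q' => ?_)
      show (∏ t ∈ Finset.range (T - 1), Q'.val (z t) (z (t + 1))) =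
        ∏ t ∈ Finset.range (T - 1), Q'.val (z' t) (z' (t + 1))
      rw [prod_trans_eq T z, prod_trans_eq T z']
      exact Finset.prod_congr rfl fun p _ => by rw [hcnt p.1 p.2]
    have := h1.trans (this.trans h2.symm)
    exact (ENNReal.toReal_eq_toReal_iff' (measure_ne_top P _) (measure_ne_top P _)).mp this
  · have e1 : P {ω | ∀ t < T, Z t ω = z t} = 0 := by
      refine measure_mono_null ?_ (hstart z hz)
      intro ω hω t ht
      exact hω t (lt_of_lt_of_le ht hT)
    have e2 : P {ω | ∀ t < T, Z t ω = z' t} = 0 := by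
      refine measure_mono_null ?_ (hstart z' (h0 ▸ hz))
      intro ω hω t ht
      exact hω t (lt_of_lt_of_le ht hT)
    rw [e1, e2]

/-- If the joint process `(Xₜ, Yₜ)` is a mixture of hidden Markov models with mixing
measure `μ` over pairs `(P, B)` of a row-stochastic transition matrix and a row-stochastic
observation matrix, then the matrices `Q^{(P,B)}_{(i,j),(k,l)} = P_{ik} B_{kl}` are
row-stochastic, and the augmented process `(Xₜ, Yₜ)` is a mixture of Markov chains on
`S × O`; consequently it is partially exchangeable. -/
theorem augmented_process_mixture_of_markov
    {Ω : Type*} [MeasurableSpace Ω] (P : Measure Ω) [IsProbabilityMeasure P]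
    {S O : Type*} [Fintype S] [Fintype O] [DecidableEq S] [DecidableEq O]
    (X : ℕ → Ω → S) (Y : ℕ → Ω → O) (x₀ : S) (y₀ : O)
    (μ : Measure {PB : (S → S → ℝ) × (S → O → ℝ) //
        IsRowStochastic PB.1 ∧ IsRowStochastic PB.2})
    [IsProbabilityMeasure μ]
    (hinit : ∀ᵐ ω ∂P, X 0 ω = x₀ ∧ Y 0 ω = y₀)
    (hmix : ∀ T : ℕ, 1 ≤ T → ∀ (x : ℕ → S) (y : ℕ → O), x 0 = x₀ → y 0 = y₀ →
      (P {ω | ∀ t < T, X t ω = x t ∧ Y t ω = y t}).toReal =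
        ∫ PB, ∏ t ∈ Finset.range (T - 1),
          PB.val.1 (x t) (x (t + 1)) * PB.val.2 (x (t + 1)) (y (t + 1)) ∂μ) :
    (∀ (Pm : S → S → ℝ) (Bm : S → O → ℝ), IsRowStochastic Pm → IsRowStochastic Bm →
        IsRowStochastic fun p q : S × O => Pm p.1 q.1 * Bm q.1 q.2) ∧
      IsMixtureOfMarkovChains P (fun t ω => (X t ω, Y t ω)) (x₀, y₀) ∧
      IsPartiallyExchangeable P fun t ω => (X t ω, Y t ω) := by
  have hQrs : ∀ (Pm : S → S → ℝ) (Bm : S → O → ℝ), IsRowStochastic Pm →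
      IsRowStochastic Bm → IsRowStochastic fun p q : S × O => Pm p.1 q.1 * Bm q.1 q.2 := by
    intro Pm Bm hP hB
    constructor
    · intro p q; exact mul_nonneg (hP.1 _ _) (hB.1 _ _)
    · intro p
      rw [Fintype.sum_prod_type]
      simp only
      calc ∑ k, ∑ l, Pm p.1 k * Bm k l = ∑ k, Pm p.1 k * ∑ l, Bm k l := by
            simp [Finset.mul_sum]
        _ = ∑ k, Pm p.1 k := by simp [hB.2]
        _ = 1 := hP.2 _
  -- the map from (P, B) pairs to the augmented transition matrix
  let f : {PB : (S → S → ℝ) × (S → O → ℝ) // IsRowStochastic PB.1 ∧ IsRowStochastic PB.2} →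
      {Q : (S × O) → (S × O) → ℝ // IsRowStochastic Q} :=
    fun PB => ⟨fun p q => PB.val.1 p.1 q.1 * PB.val.2 q.1 q.2,
      hQrs _ _ PB.prop.1 PB.prop.2⟩
  have hf : Measurable f := by
    refine Measurable.subtype_mk ?_
    refine measurable_pi_lambda _ fun p => measurable_pi_lambda _ fun q => ?_
    refine Measurable.mul ?_ ?_
    · exact (measurable_pi_apply q.1).comp
        ((measurable_pi_apply p.1).comp (measurable_fst.comp measurable_subtype_coe))
    · exact (measurable_pi_apply q.2).comp
        ((measurable_pi_apply q.1).comp (measurable_snd.comp measurable_subtype_coe))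
  have hmixQ : IsMixtureOfMarkovChains P (fun t ω => (X t ω, Y t ω)) (x₀, y₀) := by
    refine ⟨μ.map f, Measure.isProbabilityMeasure_map hf.aemeasurable, ?_⟩
    intro T hT z hz0
    have hsets : {ω | ∀ t < T, (X t ω, Y t ω) = z t} =
        {ω | ∀ t < T, X t ω = (z t).1 ∧ Y t ω = (z t).2} := by
      ext ω; simp [Prod.ext_iff]
    have hmeas : Measurable fun Q' : {Q : (S × O) → (S × O) → ℝ // IsRowStochastic Q} =>
        ∏ t ∈ Finset.range (T - 1), Q'.val (z t) (z (t + 1)) := by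
      refine Finset.measurable_prod _ fun t _ => ?_
      exact (measurable_pi_apply _).comp ((measurable_pi_apply _).comp measurable_subtype_coe)
    rw [hsets, hmix T hT (fun t => (z t).1) (fun t => (z t).2)
        (by simp [hz0]) (by simp [hz0]),
      integral_map hf.aemeasurable hmeas.aestronglyMeasurable]
  refine ⟨hQrs, hmixQ, ?_⟩
  refine mixture_implies_pe P _ (x₀, y₀) ?_ hmixQ
  intro z hz
  have : {ω | ∀ t < 1, (X t ω, Y t ω) = z t} ⊆ {ω | ¬(X 0 ω = x₀ ∧ Y 0 ω = y₀)} := by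
    intro ω hω
    have h0 := hω 0 one_pos
    intro hc
    exact hz (by rw [← h0]; exact congrArg₂ Prod.mk hc.1 hc.2)
  refine measure_mono_null this ?_
  have := hinit
  rwa [ae_iff] at this
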